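/- Let A be an atomic set partition of [n] (n ≥ 1) with r blocks, and let γ be a set composition of [r]. Then γ[A] = A if and only if γ is the set composition with the single block [r]. Consequently, the coefficient of the basis element A in p(A) = ∑_{γ ∈ Γ'(r)} (−1)^{ℓ(γ)−1} γ[A] equals 1. -/

import Mathlib

open Finset

/-- `[n] = {1, …, n}` as a finset of naturals. -/
def seg (n : ℕ) : Finset ℕ := Finset.Icc 1 n

/-- A (raw) collection of blocks. -/
abbrev Blocks := Finset (Finset ℕ)

/-- The ground set (union of the blocks). -/
def ground (A : Blocks) : Finset ℕ := A.sup id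

/-- `A` is a set partition of the finite set `X`: nonempty pairwise disjoint blocks with union `X`. -/
def IsPartitionOf (A : Blocks) (X : Finset ℕ) : Prop :=
  (∀ B ∈ A, B.Nonempty) ∧ (A : Set (Finset ℕ)).PairwiseDisjoint id ∧ ground A = X

/-- `A` is a set partition of `[n]`. -/
def IsSP (A : Blocks) (n : ℕ) : Prop := IsPartitionOf A (seg n)

/-- The unique increasing bijection from `X` onto `[#X]`. -/
def stdFun (X : Finset ℕ) (x : ℕ) : ℕ := (X.filter (· < x)).card + 1

/-- Standardization of a collection of blocks. -/
def stdP (A : Blocks) : Blocks := A.image fun B => B.image (stdFun (ground A))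

/-- Shift all entries of all blocks up by `k`. -/
def shiftP (A : Blocks) (k : ℕ) : Blocks := A.image fun B => B.image (· + k)

/-- Concatenation `A | B` of set partitions: shift `B` up by the weight of `A`. -/
def concatP (A B : Blocks) : Blocks := A ∪ shiftP B (ground A).card

/-- The `i`-th block of `A` (1-based), where blocks are ordered by increasing minima. -/
def blockAt (A : Blocks) (i : ℕ) : Finset ℕ :=
  (A.filter fun B => (A.filter fun C => C.min ≤ B.min).card = i).sup id

/-- `A_J` : the subcollection of blocks of `A` indexed by `J`. -/
def subColl (A : Blocks) (J : Finset ℕ) : Blocks := J.image (blockAt A)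

/-- `A` is an atomic set partition of `[n]`. -/
def IsAtomicSP (A : Blocks) (n : ℕ) : Prop :=
  IsSP A n ∧ 1 ≤ n ∧
    ¬ ∃ m B C, 0 < m ∧ m < n ∧ IsSP B m ∧ IsSP C (n - m) ∧ A = concatP B C

/-- Raw set compositions: words whose letters are finsets of naturals. -/
abbrev SComp := List (Finset ℕ)

/-- The union of the letters of a word. -/
def sunion (γ : SComp) : Finset ℕ := γ.foldr (· ∪ ·) ∅

/-- `γ` is a set composition of `K`. -/
def IsSCompOf (γ : SComp) (K : Finset ℕ) : Prop :=
  (∀ B ∈ γ, B.Nonempty) ∧ γ.Pairwise Disjoint ∧ sunion γ = K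

/-- `γ[A] = std(A_{γ₁}) | std(A_{γ₂}) | ⋯ | std(A_{γₛ})`. -/
def applyComp (γ : SComp) (A : Blocks) : Blocks :=
  (γ.map fun g => stdP (subColl A g)).foldr concatP ∅

abbrev NCSym := Blocks →₀ ℚ

/-- The basis element of `NCSym` indexed by a set partition. -/
noncomputable def bas (A : Blocks) : NCSym := Finsupp.single A 1

/-- `p(A) = ∑_{γ ∈ Γ'(r)} (-1)^{ℓ(γ)-1} γ[A]`. -/
noncomputable def pNC (A : Blocks) (r : ℕ) : NCSym :=
  ∑ᶠ γ ∈ {γ : SComp | IsSCompOf γ (seg r) ∧ 1 ∈ γ.headI},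
    ((-1 : ℚ) ^ (γ.length - 1)) • bas (applyComp γ A)

open TensorProduct in
/-- `Δ(A) = ∑_{K ⊔ L = [r]} std(A_K) ⊗ std(A_L)` on a basis element. -/
noncomputable def deltaB (A : Blocks) : NCSym ⊗[ℚ] NCSym :=
  ∑ K ∈ (seg A.card).powerset,
    bas (stdP (subColl A K)) ⊗ₜ[ℚ] bas (stdP (subColl A (seg A.card \ K)))

/-- The coproduct of `NCSym`, extended linearly. -/
noncomputable def Delta : NCSym →ₗ[ℚ] TensorProduct ℚ NCSym NCSym :=
  Finsupp.lsum ℚ fun A => LinearMap.toSpanSingleton ℚ _ (deltaB A)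


section AuxLemmas

lemma mem_ground {A : Blocks} {a : ℕ} : a ∈ ground A ↔ ∃ B ∈ A, a ∈ B := by
  simp [ground, Finset.mem_sup]

lemma subset_ground {A : Blocks} {B : Finset ℕ} (h : B ∈ A) : B ⊆ ground A :=
  Finset.le_sup (f := id) h

lemma ground_union (A B : Blocks) : ground (A ∪ B) = ground A ∪ ground B :=
  Finset.sup_union

lemma card_seg (n : ℕ) : (seg n).card = n := by simp [seg]

lemma ground_empty : ground (∅ : Blocks) = ∅ := rfl

/-! ### stdFun -/

lemma stdFun_mem {X : Finset ℕ} {x : ℕ} (hx : x ∈ X) : stdFun X x ∈ seg X.card := by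
  simp only [seg, Finset.mem_Icc, stdFun]
  refine ⟨by omega, ?_⟩
  have h1 : X.filter (· < x) ⊆ X.erase x := by
    intro y hy
    simp only [Finset.mem_filter] at hy
    exact Finset.mem_erase.2 ⟨by omega, hy.1⟩
  have h2 := Finset.card_le_card h1
  have h3 := Finset.card_erase_of_mem hx
  have h4 : 1 ≤ X.card := Finset.card_pos.2 ⟨x, hx⟩
  omega

lemma stdFun_lt {X : Finset ℕ} {x y : ℕ} (hx : x ∈ X) (hxy : x < y) :
    stdFun X x < stdFun X y := by
  have hss : X.filter (· < x) ⊂ X.filter (· < y) := by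
    constructor
    · intro z hz
      simp only [Finset.mem_filter] at hz ⊢
      exact ⟨hz.1, by omega⟩
    · intro h
      have := h (Finset.mem_filter.2 ⟨hx, hxy⟩)
      simp only [Finset.mem_filter] at this
      omega
  have := Finset.card_lt_card hss
  simp only [stdFun]; omega

lemma stdFun_injOn {X : Finset ℕ} : Set.InjOn (stdFun X) X := by
  intro x hx y hy h
  by_contra hne
  rcases Nat.lt_or_ge x y with hlt | hge
  · exact absurd h (Nat.ne_of_lt (stdFun_lt hx hlt))
  · have : y < x := by omega
    exact absurd h.symm (Nat.ne_of_lt (stdFun_lt hy this))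

lemma image_stdFun (X : Finset ℕ) : X.image (stdFun X) = seg X.card := by
  apply Finset.eq_of_subset_of_card_le
  · intro a ha
    rcases Finset.mem_image.1 ha with ⟨x, hx, rfl⟩
    exact stdFun_mem hx
  · rw [card_seg, Finset.card_image_of_injOn stdFun_injOn]

lemma stdFun_seg_id {m x : ℕ} (hx : x ∈ seg m) : stdFun (seg m) x = x := by
  simp only [seg, Finset.mem_Icc] at hx
  have : (seg m).filter (· < x) = Finset.Icc 1 (x - 1) := by
    ext y
    simp only [seg, Finset.mem_filter, Finset.mem_Icc]
    omega
  simp only [stdFun, this, Nat.card_Icc]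
  omega

end AuxLemmas


section BlockAtLemmas

/-- The rank of a block: its 1-based position in the order of increasing minima. -/
def rk (A : Blocks) (B : Finset ℕ) : ℕ := (A.filter fun C => C.min ≤ B.min).card

lemma blockAt_eq_rk (A : Blocks) (i : ℕ) :
    blockAt A i = (A.filter fun B => rk A B = i).sup id := rfl

variable {A : Blocks} (hne : ∀ B ∈ A, B.Nonempty)
  (hdisj : (A : Set (Finset ℕ)).PairwiseDisjoint id)

include hne hdisj in
lemma min_injOn {B C : Finset ℕ} (hB : B ∈ A) (hC : C ∈ A) (h : B.min = C.min) : B = C := by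
  by_contra hBC
  have hBne := hne B hB
  have hCne := hne C hC
  have h1 : (B.min' hBne : WithTop ℕ) = B.min := Finset.coe_min' hBne
  have h2 : (C.min' hCne : WithTop ℕ) = C.min := Finset.coe_min' hCne
  have : B.min' hBne = C.min' hCne := by
    have := h1.trans (h.trans h2.symm)
    exact_mod_cast this
  have hmem : B.min' hBne ∈ C := this ▸ Finset.min'_mem C hCne
  exact (Finset.disjoint_left.1 (hdisj hB hC hBC)) (Finset.min'_mem B hBne) hmem

include hne hdisj in
lemma rk_lt {B C : Finset ℕ} (hB : B ∈ A) (hC : C ∈ A) (h : B.min < C.min) :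
    rk A B < rk A C := by
  apply Finset.card_lt_card
  constructor
  · intro D hD
    simp only [Finset.mem_filter] at hD ⊢
    exact ⟨hD.1, le_trans hD.2 (le_of_lt h)⟩
  · intro hsub
    have := hsub (Finset.mem_filter.2 ⟨hC, le_refl _⟩)
    simp only [Finset.mem_filter] at this
    exact absurd this.2 (not_le.2 h)

include hne hdisj in
lemma rk_injOn : Set.InjOn (rk A) A := by
  intro B hB C hC h
  rcases lt_trichotomy B.min C.min with hlt | heq | hgt
  · exact absurd h (Nat.ne_of_lt (rk_lt hne hdisj hB hC hlt))
  · exact min_injOn hne hdisj hB hC heq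
  · exact absurd h.symm (Nat.ne_of_lt (rk_lt hne hdisj hC hB hgt))

lemma rk_mem {B : Finset ℕ} (hB : B ∈ A) : rk A B ∈ seg A.card := by
  simp only [seg, Finset.mem_Icc]
  constructor
  · exact Finset.card_pos.2 ⟨B, Finset.mem_filter.2 ⟨hB, le_refl _⟩⟩
  · exact Finset.card_filter_le _ _

include hne hdisj in
lemma image_rk : A.image (rk A) = seg A.card := by
  apply Finset.eq_of_subset_of_card_le
  · intro i hi
    rcases Finset.mem_image.1 hi with ⟨B, hB, rfl⟩
    exact rk_mem hB
  · rw [card_seg, Finset.card_image_of_injOn (rk_injOn hne hdisj)]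

include hne hdisj in
lemma blockAt_rk {B : Finset ℕ} (hB : B ∈ A) : blockAt A (rk A B) = B := by
  rw [blockAt_eq_rk]
  have : (A.filter fun B' => rk A B' = rk A B) = {B} := by
    ext C
    simp only [Finset.mem_filter, Finset.mem_singleton]
    constructor
    · rintro ⟨hC, h⟩
      exact rk_injOn hne hdisj hC hB h
    · rintro rfl
      exact ⟨hB, rfl⟩
  rw [this, Finset.sup_singleton, id]

include hne hdisj in
lemma exists_rk {i : ℕ} (hi : i ∈ seg A.card) : ∃ B ∈ A, rk A B = i := by
  have := image_rk hne hdisj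
  have hi' : i ∈ A.image (rk A) := this ▸ hi
  rcases Finset.mem_image.1 hi' with ⟨B, hB, h⟩
  exact ⟨B, hB, h⟩

include hne hdisj in
lemma blockAt_mem {i : ℕ} (hi : i ∈ seg A.card) : blockAt A i ∈ A := by
  rcases exists_rk hne hdisj hi with ⟨B, hB, rfl⟩
  rw [blockAt_rk hne hdisj hB]; exact hB

include hne hdisj in
lemma blockAt_nonempty {i : ℕ} (hi : i ∈ seg A.card) : (blockAt A i).Nonempty :=
  hne _ (blockAt_mem hne hdisj hi)

lemma blockAt_of_not_mem {i : ℕ} (hi : i ∉ seg A.card) : blockAt A i = ∅ := by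
  rw [blockAt_eq_rk]
  have : (A.filter fun B => rk A B = i) = ∅ := by
    apply Finset.filter_eq_empty_iff.2
    intro B hB h
    exact hi (h ▸ rk_mem hB)
  rw [this, Finset.sup_empty]
  rfl

include hne hdisj in
lemma blockAt_injOn : Set.InjOn (blockAt A) (seg A.card) := by
  intro i hi j hj h
  rcases exists_rk hne hdisj hi with ⟨B, hB, rfl⟩
  rcases exists_rk hne hdisj hj with ⟨C, hC, rfl⟩
  rw [blockAt_rk hne hdisj hB, blockAt_rk hne hdisj hC] at h
  rw [h]

include hne hdisj in
lemma blockAt_disjoint {i j : ℕ} (hij : i ≠ j) : Disjoint (blockAt A i) (blockAt A j) := by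
  by_cases hi : i ∈ seg A.card
  · by_cases hj : j ∈ seg A.card
    · have hBi := blockAt_mem hne hdisj hi
      have hBj := blockAt_mem hne hdisj hj
      have hneq : blockAt A i ≠ blockAt A j := fun h =>
        hij (blockAt_injOn hne hdisj hi hj h)
      exact hdisj hBi hBj hneq
    · rw [blockAt_of_not_mem hj]; exact Finset.disjoint_empty_right _
  · rw [blockAt_of_not_mem hi]; exact Finset.disjoint_empty_left _

include hne hdisj in
lemma subColl_seg : subColl A (seg A.card) = A := by
  apply Finset.Subset.antisymm
  · intro B hB
    rcases Finset.mem_image.1 hB with ⟨i, hi, rfl⟩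
    exact blockAt_mem hne hdisj hi
  · intro B hB
    exact Finset.mem_image.2 ⟨rk A B, rk_mem hB, blockAt_rk hne hdisj hB⟩

end BlockAtLemmas


section StdConcatLemmas

lemma disjoint_image_of_injOn {f : ℕ → ℕ} {s t : Finset ℕ} {u : Set ℕ}
    (hinj : Set.InjOn f u) (hs : ↑s ⊆ u) (ht : ↑t ⊆ u) (h : Disjoint s t) :
    Disjoint (s.image f) (t.image f) := by
  rw [Finset.disjoint_left] at h ⊢
  intro a ha hb
  rcases Finset.mem_image.1 ha with ⟨x, hx, rfl⟩
  rcases Finset.mem_image.1 hb with ⟨y, hy, hxy⟩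
  have : y = x := hinj (ht hy) (hs hx) hxy
  exact h hx (this ▸ hy)

lemma ground_stdP (A : Blocks) : ground (stdP A) = (ground A).image (stdFun (ground A)) := by
  ext a
  simp only [mem_ground, stdP, Finset.mem_image]
  constructor
  · rintro ⟨B, ⟨C, hC, rfl⟩, ha⟩
    rcases Finset.mem_image.1 ha with ⟨x, hx, rfl⟩
    exact ⟨x, ⟨C, hC, hx⟩, rfl⟩
  · rintro ⟨x, hx, rfl⟩
    rcases hx with ⟨C, hC, hxC⟩
    exact ⟨C.image (stdFun (ground A)), ⟨C, hC, rfl⟩, Finset.mem_image_of_mem _ hxC⟩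

lemma isSP_stdP {A : Blocks} (hne : ∀ B ∈ A, B.Nonempty)
    (hdisj : (A : Set (Finset ℕ)).PairwiseDisjoint id) :
    IsSP (stdP A) (ground A).card := by
  refine ⟨?_, ?_, ?_⟩
  · intro B hB
    rcases Finset.mem_image.1 hB with ⟨C, hC, rfl⟩
    exact (hne C hC).image _
  · intro B hB C hC hBC
    simp only [Finset.mem_coe, stdP, Finset.mem_image] at hB hC
    rcases hB with ⟨B', hB', rfl⟩
    rcases hC with ⟨C', hC', rfl⟩
    have hne' : B' ≠ C' := fun h => hBC (by rw [h])
    exact disjoint_image_of_injOn stdFun_injOn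
      (Finset.coe_subset.2 (subset_ground hB'))
      (Finset.coe_subset.2 (subset_ground hC')) (hdisj hB' hC' hne')
  · rw [ground_stdP, image_stdFun]

lemma stdP_of_ground_seg {A : Blocks} {m : ℕ} (h : ground A = seg m) : stdP A = A := by
  unfold stdP
  rw [h]
  have : ∀ B ∈ A, B.image (stdFun (seg m)) = B := by
    intro B hB
    have hBsub : B ⊆ seg m := h ▸ subset_ground hB
    rw [show B.image (stdFun (seg m)) = B.image id from
      Finset.image_congr fun x hx => stdFun_seg_id (hBsub hx), Finset.image_id]
  calc A.image (fun B => B.image (stdFun (seg m))) = A.image id :=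
        Finset.image_congr fun B hB => this B hB
    _ = A := Finset.image_id

lemma mem_ground_shift {C : Blocks} {k a : ℕ} :
    a ∈ ground (shiftP C k) ↔ ∃ b ∈ ground C, b + k = a := by
  simp only [mem_ground, shiftP, Finset.mem_image]
  constructor
  · rintro ⟨B, ⟨D, hD, rfl⟩, ha⟩
    rcases Finset.mem_image.1 ha with ⟨b, hb, rfl⟩
    exact ⟨b, ⟨D, hD, hb⟩, rfl⟩
  · rintro ⟨b, hb, rfl⟩
    rcases hb with ⟨D, hD, hbD⟩
    exact ⟨D.image (· + k), ⟨D, hD, rfl⟩, Finset.mem_image_of_mem _ hbD⟩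

lemma isSP_concat {B C : Blocks} {m k : ℕ} (hB : IsSP B m) (hC : IsSP C k) :
    IsSP (concatP B C) (m + k) := by
  obtain ⟨hBne, hBdisj, hBg⟩ := hB
  obtain ⟨hCne, hCdisj, hCg⟩ := hC
  have hcard : (ground B).card = m := by rw [hBg, card_seg]
  have hBsub : ∀ D ∈ B, ∀ a ∈ D, 1 ≤ a ∧ a ≤ m := by
    intro D hD a ha
    have := hBg ▸ subset_ground hD ha
    simpa [seg, Finset.mem_Icc] using this
  have hSsub : ∀ D ∈ shiftP C (ground B).card, ∀ a ∈ D, m + 1 ≤ a ∧ a ≤ m + k := by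
    intro D hD a ha
    rcases Finset.mem_image.1 hD with ⟨E, hE, rfl⟩
    rcases Finset.mem_image.1 ha with ⟨b, hb, rfl⟩
    have := hCg ▸ subset_ground hE hb
    simp only [seg, Finset.mem_Icc] at this
    omega
  refine ⟨?_, ?_, ?_⟩
  · intro D hD
    rcases Finset.mem_union.1 hD with h | h
    · exact hBne D h
    · rcases Finset.mem_image.1 h with ⟨E, hE, rfl⟩
      exact (hCne E hE).image _
  · intro D hD E hE hDE
    rcases Finset.mem_union.1 hD with h1 | h1 <;> rcases Finset.mem_union.1 hE with h2 | h2
    · exact hBdisj h1 h2 hDE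
    · show Disjoint D E
      rw [Finset.disjoint_left]
      intro a ha hb
      have := hBsub D h1 a ha
      have := hSsub E h2 a hb
      omega
    · show Disjoint D E
      rw [Finset.disjoint_left]
      intro a ha hb
      have := hSsub D h1 a ha
      have := hBsub E h2 a hb
      omega
    · rcases Finset.mem_image.1 h1 with ⟨D', hD', rfl⟩
      rcases Finset.mem_image.1 h2 with ⟨E', hE', rfl⟩
      have hne' : D' ≠ E' := fun h => hDE (by rw [h])
      exact disjoint_image_of_injOn (f := (· + (ground B).card)) (u := Set.univ)
        (fun x _ y _ h => Nat.add_right_cancel h) (by simp) (by simp) (hCdisj hD' hE' hne')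
  · ext a
    simp only [concatP, ground_union, Finset.mem_union, mem_ground_shift, hBg, hCg, hcard,
      seg, Finset.mem_Icc, Nat.card_Icc]
    constructor
    · rintro (h | ⟨b, hb, rfl⟩) <;> omega
    · intro h
      by_cases ham : a ≤ m
      · left; omega
      · right; exact ⟨a - m, by omega, by omega⟩

end StdConcatLemmas

section SubCollLemmas

lemma mem_ground_subColl {A : Blocks} {g : Finset ℕ} {a : ℕ} :
    a ∈ ground (subColl A g) ↔ ∃ i ∈ g, a ∈ blockAt A i := by
  simp only [mem_ground, subColl, Finset.mem_image]
  constructor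
  · rintro ⟨B, ⟨i, hi, rfl⟩, ha⟩
    exact ⟨i, hi, ha⟩
  · rintro ⟨i, hi, ha⟩
    exact ⟨blockAt A i, ⟨i, hi, rfl⟩, ha⟩

lemma subColl_union (A : Blocks) (g h : Finset ℕ) :
    subColl A (g ∪ h) = subColl A g ∪ subColl A h := Finset.image_union _ _

variable {A : Blocks} (hne : ∀ B ∈ A, B.Nonempty)
  (hdisj : (A : Set (Finset ℕ)).PairwiseDisjoint id)

include hne hdisj in
lemma ground_subColl_disjoint {g h : Finset ℕ} (hgh : Disjoint g h) :
    Disjoint (ground (subColl A g)) (ground (subColl A h)) := by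
  rw [Finset.disjoint_left]
  intro a ha hb
  rcases mem_ground_subColl.1 ha with ⟨i, hi, hai⟩
  rcases mem_ground_subColl.1 hb with ⟨j, hj, haj⟩
  have hij : i ≠ j := fun h => (Finset.disjoint_left.1 hgh) hi (h ▸ hj)
  exact (Finset.disjoint_left.1 (blockAt_disjoint hne hdisj hij)) hai haj

include hne hdisj in
lemma subColl_blocks_nonempty {g : Finset ℕ} (hg : g ⊆ seg A.card) :
    ∀ B ∈ subColl A g, B.Nonempty := by
  intro B hB
  rcases Finset.mem_image.1 hB with ⟨i, hi, rfl⟩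
  exact blockAt_nonempty hne hdisj (hg hi)

include hne hdisj in
lemma subColl_blocks_disjoint {g : Finset ℕ} :
    (↑(subColl A g) : Set (Finset ℕ)).PairwiseDisjoint id := by
  intro B hB C hC hBC
  simp only [Finset.mem_coe, subColl, Finset.mem_image] at hB hC
  rcases hB with ⟨i, hi, rfl⟩
  rcases hC with ⟨j, hj, rfl⟩
  have hij : i ≠ j := fun h => hBC (by rw [h])
  exact blockAt_disjoint hne hdisj hij

include hne hdisj in
lemma ground_subColl_subset {g : Finset ℕ} (hg : g ⊆ seg A.card) :
    ground (subColl A g) ⊆ ground A := by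
  intro a ha
  rcases mem_ground_subColl.1 ha with ⟨i, hi, hai⟩
  exact subset_ground (blockAt_mem hne hdisj (hg hi)) hai

end SubCollLemmas

section SunionLemmas

lemma sunion_cons (g : Finset ℕ) (t : SComp) : sunion (g :: t) = g ∪ sunion t := rfl

lemma mem_sunion {γ : SComp} {a : ℕ} : a ∈ sunion γ ↔ ∃ g ∈ γ, a ∈ g := by
  induction γ with
  | nil => simp [sunion]
  | cons g t ih => simp [sunion_cons, Finset.mem_union, ih]

lemma disjoint_sunion {g : Finset ℕ} {t : SComp} (h : ∀ h' ∈ t, Disjoint g h') :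
    Disjoint g (sunion t) := by
  rw [Finset.disjoint_right]
  intro a ha hag
  rcases mem_sunion.1 ha with ⟨h', hh', hah'⟩
  exact (Finset.disjoint_left.1 (h h' hh')) hag hah'

end SunionLemmas

section ApplyCompLemmas

variable {A : Blocks} (hne : ∀ B ∈ A, B.Nonempty)
  (hdisj : (A : Set (Finset ℕ)).PairwiseDisjoint id)

include hne hdisj in
lemma sum_weights {γ : SComp} (hdisjγ : γ.Pairwise Disjoint) :
    (γ.map fun g => (ground (subColl A g)).card).sum
      = (ground (subColl A (sunion γ))).card := by
  induction γ with
  | nil => simp [sunion, subColl, ground_empty]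
  | cons g t ih =>
    have hpair := List.pairwise_cons.1 hdisjγ
    have hd : Disjoint g (sunion t) := disjoint_sunion hpair.1
    rw [List.map_cons, List.sum_cons, ih hpair.2, sunion_cons, subColl_union, ground_union,
      Finset.card_union_of_disjoint (ground_subColl_disjoint hne hdisj hd)]

lemma applyComp_nil (A : Blocks) : applyComp [] A = ∅ := rfl

lemma applyComp_cons (g : Finset ℕ) (t : SComp) (A : Blocks) :
    applyComp (g :: t) A = concatP (stdP (subColl A g)) (applyComp t A) := rfl

lemma isSP_empty : IsSP (∅ : Blocks) 0 := by
  refine ⟨by simp, by simp, ?_⟩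
  rw [ground_empty]
  simp [seg]

include hne hdisj in
lemma isSP_applyComp {γ : SComp} (hg : ∀ g ∈ γ, g ⊆ seg A.card) :
    IsSP (applyComp γ A) ((γ.map fun g => (ground (subColl A g)).card).sum) := by
  induction γ with
  | nil => simpa [applyComp_nil] using isSP_empty
  | cons g t ih =>
    rw [applyComp_cons, List.map_cons, List.sum_cons]
    exact isSP_concat
      (isSP_stdP (subColl_blocks_nonempty hne hdisj (hg g (List.mem_cons_self)))
        (subColl_blocks_disjoint hne hdisj))
      (ih fun g' hg' => hg g' (List.mem_cons_of_mem g hg'))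

end ApplyCompLemmas


section MainHelpers

lemma length_le_card_sunion {γ : SComp} (hne : ∀ g ∈ γ, g.Nonempty)
    (hd : γ.Pairwise Disjoint) : γ.length ≤ (sunion γ).card := by
  induction γ with
  | nil => simp
  | cons g t ih =>
    have hpair := List.pairwise_cons.1 hd
    have hdj : Disjoint g (sunion t) := disjoint_sunion hpair.1
    rw [sunion_cons, Finset.card_union_of_disjoint hdj, List.length_cons]
    have h1 : 1 ≤ g.card := Finset.card_pos.2 (hne g (List.mem_cons_self))
    have h2 := ih (fun g' h => hne g' (List.mem_cons_of_mem g h)) hpair.2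
    omega

lemma finite_scomps (r : ℕ) : {γ : SComp | IsSCompOf γ (seg r)}.Finite := by
  have hsub : {γ : SComp | IsSCompOf γ (seg r)} ⊆
      (fun l : List {x : Finset ℕ // x ∈ (seg r).powerset} => l.map Subtype.val) ''
        {l | l.length ≤ r} := by
    intro γ hγ
    obtain ⟨h1, h2, h3⟩ := hγ
    have hmem : ∀ g ∈ γ, g ∈ (seg r).powerset := fun g hg =>
      Finset.mem_powerset.2 fun x hx => h3 ▸ mem_sunion.2 ⟨g, hg, hx⟩
    refine ⟨γ.attach.map (fun x => ⟨x.1, hmem x.1 x.2⟩), ?_, ?_⟩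
    · simp only [Set.mem_setOf_eq, List.length_map, List.length_attach]
      calc γ.length ≤ (sunion γ).card := length_le_card_sunion h1 h2
        _ = r := by rw [h3, card_seg]
    · dsimp only
      rw [List.map_map]
      exact List.attach_map_subtype_val γ
  exact Set.Finite.subset ((List.finite_length_le _ r).image _) hsub

lemma applyComp_singleton_seg {n : ℕ} {A : Blocks} (hA : IsSP A n) :
    applyComp [seg A.card] A = A := by
  obtain ⟨hne, hdisj, hg⟩ := hA
  rw [applyComp_cons, applyComp_nil, subColl_seg hne hdisj, stdP_of_ground_seg hg]
  unfold concatP shiftP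
  simp

lemma part1 {n : ℕ} (hn : 1 ≤ n) {A : Blocks} (hA : IsSP A n) (hatom : IsAtomicSP A n)
    (γ : SComp) (hγ : IsSCompOf γ (seg A.card)) :
    applyComp γ A = A ↔ γ = [seg A.card] := by
  obtain ⟨hne, hdisj, hgr⟩ := hA
  obtain ⟨hγne, hγd, hγu⟩ := hγ
  constructor
  · intro happ
    match γ, hγne, hγd, hγu, happ with
    | [], hγne, hγd, hγu, happ =>
      exfalso
      rw [applyComp_nil] at happ
      have h1 : (1:ℕ) ∈ seg n := by simp only [seg, Finset.mem_Icc]; omega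
      rw [← hgr, ← happ] at h1
      rw [ground_empty] at h1
      exact absurd h1 (Finset.notMem_empty 1)
    | [g], hγne, hγd, hγu, happ =>
      have : g = seg A.card := by
        rw [← hγu, sunion_cons]
        simp [sunion]
      rw [this]
    | g :: h' :: t, hγne, hγd, hγu, happ =>
      exfalso
      have hgsub : ∀ g' ∈ g :: h' :: t, g' ⊆ seg A.card := fun g' hg' x hx =>
        hγu ▸ mem_sunion.2 ⟨g', hg', hx⟩
      set m := (ground (subColl A g)).card with hm
      have hpair := List.pairwise_cons.1 hγd
      have hBsp : IsSP (stdP (subColl A g)) m :=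
        isSP_stdP (subColl_blocks_nonempty hne hdisj (hgsub g (List.mem_cons_self)))
          (subColl_blocks_disjoint hne hdisj)
      have hCsp := isSP_applyComp hne hdisj
        (fun g' hg' => hgsub g' (List.mem_cons_of_mem g hg'))
      have htot : ((g :: h' :: t).map fun g' => (ground (subColl A g')).card).sum = n := by
        rw [sum_weights hne hdisj hγd, hγu, subColl_seg hne hdisj, hgr, card_seg]
      rw [List.map_cons, List.sum_cons] at htot
      obtain ⟨i, hi⟩ := hγne g (List.mem_cons_self)
      have higseg : i ∈ seg A.card := hgsub g (List.mem_cons_self) hi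
      obtain ⟨x, hx⟩ := blockAt_nonempty hne hdisj higseg
      have hxg : x ∈ ground (subColl A g) := mem_ground_subColl.2 ⟨i, hi, hx⟩
      have hm1 : 0 < m := Finset.card_pos.2 ⟨x, hxg⟩
      obtain ⟨j, hj⟩ := hγne h' (List.mem_cons_of_mem g (List.mem_cons_self))
      have hjseg : j ∈ seg A.card :=
        hgsub h' (List.mem_cons_of_mem g (List.mem_cons_self)) hj
      obtain ⟨y, hy⟩ := blockAt_nonempty hne hdisj hjseg
      have hygr : y ∈ seg n := hgr ▸ subset_ground (blockAt_mem hne hdisj hjseg) hy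
      have hynot : y ∉ ground (subColl A g) := by
        intro hcon
        rcases mem_ground_subColl.1 hcon with ⟨i', hi', hyi'⟩
        have hij : i' ≠ j := fun hEq =>
          (Finset.disjoint_left.1 (hpair.1 h' (List.mem_cons_self))) hi' (hEq ▸ hj)
        exact (Finset.disjoint_left.1 (blockAt_disjoint hne hdisj hij)) hyi' hy
      have hsub' : ground (subColl A g) ⊆ seg n :=
        hgr ▸ ground_subColl_subset hne hdisj (hgsub g (List.mem_cons_self))
      have hmn : m < n := by
        have := Finset.card_lt_card
          ((Finset.ssubset_iff_of_subset hsub').2 ⟨y, hygr, hynot⟩)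
        rwa [card_seg] at this
      refine hatom.2.2 ⟨m, stdP (subColl A g), applyComp (h' :: t) A, hm1, hmn, hBsp, ?_, ?_⟩
      · have hnm : (((h' :: t)).map fun g' => (ground (subColl A g')).card).sum = n - m := by
          omega
        exact hnm ▸ hCsp
      · rw [← applyComp_cons]
        exact happ.symm
  · rintro rfl
    exact applyComp_singleton_seg ⟨hne, hdisj, hgr⟩

end MainHelpers

/-- For an atomic set partition `A` of `[n]` (`n ≥ 1`) with `r` blocks and a
set composition `γ` of `[r]`, `γ[A] = A` iff `γ` is the one-block composition `([r])`.
Consequently the coefficient of the basis element `A` in `p(A)` equals `1`. -/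
theorem ncsym_pA_leading_coefficient (n r : ℕ) (hn : 1 ≤ n) (A : Blocks)
    (hA : IsSP A n) (hr : A.card = r) (hatom : IsAtomicSP A n) :
    (∀ γ : SComp, IsSCompOf γ (seg r) → (applyComp γ A = A ↔ γ = [seg r])) ∧
    pNC A r A = 1 := by
  subst hr
  obtain ⟨hne, hdisj, hgr⟩ := hA
  have hA' : IsSP A n := ⟨hne, hdisj, hgr⟩
  have hpart1 := part1 hn hA' hatom
  refine ⟨hpart1, ?_⟩
  have h1n : (1:ℕ) ∈ seg n := by simp only [seg, Finset.mem_Icc]; omega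
  have hAne : A.Nonempty := by
    rcases mem_ground.1 (hgr ▸ h1n : (1:ℕ) ∈ ground A) with ⟨B, hB, _⟩
    exact ⟨B, hB⟩
  have hr1 : 1 ≤ A.card := Finset.card_pos.2 hAne
  have hsegmem : IsSCompOf [seg A.card] (seg A.card) := by
    refine ⟨?_, ?_, ?_⟩
    · intro B hB
      rw [List.mem_singleton] at hB
      subst hB
      exact ⟨1, by simp only [seg, Finset.mem_Icc]; omega⟩
    · simp
    · simp [sunion_cons, sunion]
  have hfin : {γ : SComp | IsSCompOf γ (seg A.card) ∧ 1 ∈ γ.headI}.Finite :=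
    (finite_scomps A.card).subset fun γ hγ => hγ.1
  have hmem1 : [seg A.card] ∈ hfin.toFinset := by
    rw [Set.Finite.mem_toFinset]
    refine ⟨hsegmem, ?_⟩
    simp only [List.headI, seg, Finset.mem_Icc]
    omega
  rw [pNC, ← hfin.coe_toFinset, finsum_mem_coe_finset, Finset.sum_apply']
  rw [Finset.sum_eq_single_of_mem ([seg A.card] : SComp) hmem1 ?_]
  · simp [bas, applyComp_singleton_seg hA', Finsupp.single_eq_same]
  · intro γ hγT hγne'
    have hγS := hfin.mem_toFinset.1 hγT
    have hne'' : applyComp γ A ≠ A := fun h => hγne' ((hpart1 γ hγS.1).1 h)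
    simp [bas, Finsupp.single_apply, hne'']
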